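/- For every γ = (γ₁,γ₂,γ₃,0) ∈ ℤ⁴ with last coordinate zero, there exist constants X₁, X₂ ∈ ℂ and parameter vectors γ¹, γ² ∈ ℤ⁴ such that z₃·F_γ = X₁·F_{γ¹} + X₂·(z₁z₄ − z₂z₃)·F_{γ²} as polynomials in ℂ[z₁,z₂,z₃,z₄]. -/

import Mathlib

open MvPolynomial Finset

/-- The hypergeometric Γ-series `F_γ` for the lattice `B = ℤ⟨(1,-1,-1,1)⟩`,
as a polynomial in `ℂ[z₁,z₂,z₃,z₄]`. -/
noncomputable def GammaSeries (γ : Fin 4 → ℤ) : MvPolynomial (Fin 4) ℂ :=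
  ∑ n ∈ Finset.Icc (max (-γ 0) (-γ 3)) (min (γ 1) (γ 2)),
    MvPolynomial.C ((((γ 0 + n).toNat.factorial * (γ 1 - n).toNat.factorial *
        (γ 2 - n).toNat.factorial * (γ 3 + n).toNat.factorial : ℕ) : ℂ))⁻¹ *
      (X 0 ^ (γ 0 + n).toNat * X 1 ^ (γ 1 - n).toNat *
        X 2 ^ (γ 2 - n).toNat * X 3 ^ (γ 3 + n).toNat)

namespace GammaAux

/-- The `n`-th term of the Γ-series with parameter `γ + e₃`. -/
noncomputable def T (γ : Fin 4 → ℤ) (n : ℤ) : MvPolynomial (Fin 4) ℂ :=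
  MvPolynomial.C ((((γ 0 + n).toNat.factorial * (γ 1 - n).toNat.factorial *
      (γ 2 + 1 - n).toNat.factorial * n.toNat.factorial : ℕ) : ℂ))⁻¹ *
    (X 0 ^ (γ 0 + n).toNat * X 1 ^ (γ 1 - n).toNat *
      X 2 ^ (γ 2 + 1 - n).toNat * X 3 ^ n.toNat)

lemma fac_ne (k : ℕ) : ((k.factorial : ℂ)) ≠ 0 :=
  Nat.cast_ne_zero.mpr k.factorial_ne_zero

lemma sum_shift (γ : Fin 4 → ℤ) :
    GammaSeries (![γ 0, γ 1, γ 2 + 1, 0]) =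
      ∑ n ∈ Icc (max (-γ 0) 0) (min (γ 1) (γ 2 + 1)), T γ n := by
  simp only [GammaSeries, T, Matrix.cons_val_zero, Matrix.cons_val_one, Matrix.head_cons,
    Matrix.cons_val_two, Matrix.tail_cons, Matrix.cons_val_three, neg_zero, zero_add]

lemma mul_X2 (γ : Fin 4 → ℤ) (hγ : γ 3 = 0) :
    (X 2 : MvPolynomial (Fin 4) ℂ) * GammaSeries γ =
      ∑ n ∈ Icc (max (-γ 0) 0) (min (γ 1) (γ 2 + 1)),
        C ((γ 2 + 1 - n : ℤ) : ℂ) * T γ n := by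
  simp only [GammaSeries, hγ, neg_zero, zero_add]
  rw [Finset.mul_sum]
  have hz : ∀ n ∈ Icc (max (-γ 0) 0) (min (γ 1) (γ 2 + 1)),
      n ∉ Icc (max (-γ 0) 0) (min (γ 1) (γ 2)) →
      C ((γ 2 + 1 - n : ℤ) : ℂ) * T γ n = 0 := by
    intro n hn hn'
    rw [Finset.mem_Icc] at hn
    simp only [Finset.mem_Icc, not_and, not_le] at hn'
    have h0 : (γ 2 + 1 - n : ℤ) = 0 := by omega
    rw [h0]
    simp
  rw [← Finset.sum_subset (Finset.Icc_subset_Icc le_rfl (by omega)) hz]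
  refine Finset.sum_congr rfl fun n hn => ?_
  rw [Finset.mem_Icc] at hn
  simp only [T]
  have e2 : (γ 2 + 1 - n).toNat = (γ 2 - n).toNat + 1 := by omega
  have hcast : ((γ 2 + 1 - n : ℤ) : ℂ) = (((γ 2 - n).toNat + 1 : ℕ) : ℂ) := by
    have h : (γ 2 + 1 - n : ℤ) = (((γ 2 - n).toNat + 1 : ℕ) : ℤ) := by omega
    exact_mod_cast congrArg (Int.cast : ℤ → ℂ) h
  have key : (((γ 0 + n).toNat.factorial * (γ 1 - n).toNat.factorial *
      (γ 2 - n).toNat.factorial * n.toNat.factorial : ℕ) : ℂ)⁻¹ =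
      (((γ 2 - n).toNat + 1 : ℕ) : ℂ) *
      (((γ 0 + n).toNat.factorial * (γ 1 - n).toNat.factorial *
      ((γ 2 - n).toNat + 1).factorial * n.toNat.factorial : ℕ) : ℂ)⁻¹ := by
    have h5 : (((γ 2 - n).toNat + 1 : ℕ) : ℂ) ≠ 0 := Nat.cast_ne_zero.mpr (Nat.succ_ne_zero _)
    have hprod : (((γ 0 + n).toNat.factorial * (γ 1 - n).toNat.factorial *
        ((γ 2 - n).toNat + 1).factorial * n.toNat.factorial : ℕ) : ℂ) =
        (((γ 2 - n).toNat + 1 : ℕ) : ℂ) *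
        (((γ 0 + n).toNat.factorial * (γ 1 - n).toNat.factorial *
        (γ 2 - n).toNat.factorial * n.toNat.factorial : ℕ) : ℂ) := by
      push_cast [Nat.factorial_succ]
      ring
    rw [hprod, mul_inv, ← mul_assoc, mul_inv_cancel₀ h5, one_mul]
  rw [e2, hcast, key, C_mul]
  ring

lemma mul_X1X2 (γ : Fin 4 → ℤ) :
    (X 1 * X 2 : MvPolynomial (Fin 4) ℂ) * GammaSeries ![γ 0, γ 1 - 1, γ 2, 0] =
      ∑ n ∈ Icc (max (-γ 0) 0) (min (γ 1) (γ 2 + 1)),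
        C (((γ 1 - n) * (γ 2 + 1 - n) : ℤ) : ℂ) * T γ n := by
  simp only [GammaSeries, Matrix.cons_val_zero, Matrix.cons_val_one, Matrix.head_cons,
    Matrix.cons_val_two, Matrix.tail_cons, Matrix.cons_val_three, neg_zero, zero_add]
  rw [Finset.mul_sum]
  have hz : ∀ n ∈ Icc (max (-γ 0) 0) (min (γ 1) (γ 2 + 1)),
      n ∉ Icc (max (-γ 0) 0) (min (γ 1 - 1) (γ 2)) →
      C (((γ 1 - n) * (γ 2 + 1 - n) : ℤ) : ℂ) * T γ n = 0 := by
    intro n hn hn'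
    rw [Finset.mem_Icc] at hn
    simp only [Finset.mem_Icc, not_and, not_le] at hn'
    have h0 : γ 1 - n = 0 ∨ γ 2 + 1 - n = 0 := by omega
    have h1 : ((γ 1 - n) * (γ 2 + 1 - n) : ℤ) = 0 := by
      rcases h0 with h | h <;> rw [h] <;> ring
    rw [h1]
    simp
  rw [← Finset.sum_subset (Finset.Icc_subset_Icc le_rfl (by omega)) hz]
  refine Finset.sum_congr rfl fun n hn => ?_
  rw [Finset.mem_Icc] at hn
  simp only [T]
  have e1 : (γ 1 - n).toNat = (γ 1 - 1 - n).toNat + 1 := by omega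
  have e2 : (γ 2 + 1 - n).toNat = (γ 2 - n).toNat + 1 := by omega
  have hcast : (((γ 1 - n) * (γ 2 + 1 - n) : ℤ) : ℂ) =
      (((γ 1 - 1 - n).toNat + 1 : ℕ) : ℂ) * (((γ 2 - n).toNat + 1 : ℕ) : ℂ) := by
    have h1 : (γ 1 - n : ℤ) = (((γ 1 - 1 - n).toNat + 1 : ℕ) : ℤ) := by omega
    have h2 : (γ 2 + 1 - n : ℤ) = (((γ 2 - n).toNat + 1 : ℕ) : ℤ) := by omega
    rw [Int.cast_mul, h1, h2]
    push_cast
    ring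
  have key : (((γ 0 + n).toNat.factorial * (γ 1 - 1 - n).toNat.factorial *
      (γ 2 - n).toNat.factorial * n.toNat.factorial : ℕ) : ℂ)⁻¹ =
      ((((γ 1 - 1 - n).toNat + 1 : ℕ) : ℂ) * (((γ 2 - n).toNat + 1 : ℕ) : ℂ)) *
      (((γ 0 + n).toNat.factorial * ((γ 1 - 1 - n).toNat + 1).factorial *
      ((γ 2 - n).toNat + 1).factorial * n.toNat.factorial : ℕ) : ℂ)⁻¹ := by
    have h5 : (((γ 1 - 1 - n).toNat + 1 : ℕ) : ℂ) ≠ 0 := Nat.cast_ne_zero.mpr (Nat.succ_ne_zero _)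
    have h6 : (((γ 2 - n).toNat + 1 : ℕ) : ℂ) ≠ 0 := Nat.cast_ne_zero.mpr (Nat.succ_ne_zero _)
    have hprod : (((γ 0 + n).toNat.factorial * ((γ 1 - 1 - n).toNat + 1).factorial *
        ((γ 2 - n).toNat + 1).factorial * n.toNat.factorial : ℕ) : ℂ) =
        ((((γ 1 - 1 - n).toNat + 1 : ℕ) : ℂ) * (((γ 2 - n).toNat + 1 : ℕ) : ℂ)) *
        (((γ 0 + n).toNat.factorial * (γ 1 - 1 - n).toNat.factorial *
        (γ 2 - n).toNat.factorial * n.toNat.factorial : ℕ) : ℂ) := by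
      push_cast [Nat.factorial_succ]
      ring
    rw [hprod, mul_inv, ← mul_assoc, mul_inv_cancel₀ (mul_ne_zero h5 h6), one_mul]
  rw [e1, e2, hcast, key, C_mul, C_mul]
  ring

lemma mul_X0X3 (γ : Fin 4 → ℤ) :
    (X 0 * X 3 : MvPolynomial (Fin 4) ℂ) * GammaSeries ![γ 0, γ 1 - 1, γ 2, 0] =
      ∑ n ∈ Icc (max (-γ 0) 0) (min (γ 1) (γ 2 + 1)),
        C (((γ 0 + n) * n : ℤ) : ℂ) * T γ n := by
  simp only [GammaSeries, Matrix.cons_val_zero, Matrix.cons_val_one, Matrix.head_cons,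
    Matrix.cons_val_two, Matrix.tail_cons, Matrix.cons_val_three, neg_zero, zero_add]
  rw [Finset.mul_sum]
  have hz : ∀ n ∈ Icc (max (-γ 0) 0) (min (γ 1) (γ 2 + 1)),
      n ∉ Icc (max (-γ 0) 0 + 1) (min (γ 1) (γ 2 + 1)) →
      C (((γ 0 + n) * n : ℤ) : ℂ) * T γ n = 0 := by
    intro n hn hn'
    rw [Finset.mem_Icc] at hn
    simp only [Finset.mem_Icc, not_and, not_le] at hn'
    have h0 : γ 0 + n = 0 ∨ n = 0 := by omega
    have h1 : ((γ 0 + n) * n : ℤ) = 0 := by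
      rcases h0 with h | h <;> rw [h] <;> ring
    rw [h1]
    simp
  rw [← Finset.sum_subset (Finset.Icc_subset_Icc (by omega) le_rfl) hz]
  rw [show Icc (max (-γ 0) 0 + 1) (min (γ 1) (γ 2 + 1)) =
      (Icc (max (-γ 0) 0) (min (γ 1 - 1) (γ 2))).map (addRightEmbedding 1) from by
    rw [Finset.map_add_right_Icc]; congr 1; omega]
  rw [Finset.sum_map]
  refine Finset.sum_congr rfl fun m hm => ?_
  rw [Finset.mem_Icc] at hm
  simp only [addRightEmbedding_apply, T]
  have eA : (γ 0 + (m + 1)).toNat = (γ 0 + m).toNat + 1 := by omega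
  have eB : (γ 1 - (m + 1)).toNat = (γ 1 - 1 - m).toNat := by omega
  have eC : (γ 2 + 1 - (m + 1)).toNat = (γ 2 - m).toNat := by omega
  have eD : (m + 1).toNat = m.toNat + 1 := by omega
  have hcast : (((γ 0 + (m + 1)) * (m + 1) : ℤ) : ℂ) =
      (((γ 0 + m).toNat + 1 : ℕ) : ℂ) * ((m.toNat + 1 : ℕ) : ℂ) := by
    have h1 : (γ 0 + (m + 1) : ℤ) = (((γ 0 + m).toNat + 1 : ℕ) : ℤ) := by omega
    have h2 : (m + 1 : ℤ) = ((m.toNat + 1 : ℕ) : ℤ) := by omega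
    rw [Int.cast_mul, h1, h2]
    push_cast
    ring
  have key : (((γ 0 + m).toNat.factorial * (γ 1 - 1 - m).toNat.factorial *
      (γ 2 - m).toNat.factorial * m.toNat.factorial : ℕ) : ℂ)⁻¹ =
      ((((γ 0 + m).toNat + 1 : ℕ) : ℂ) * ((m.toNat + 1 : ℕ) : ℂ)) *
      ((((γ 0 + m).toNat + 1).factorial * (γ 1 - 1 - m).toNat.factorial *
      (γ 2 - m).toNat.factorial * (m.toNat + 1).factorial : ℕ) : ℂ)⁻¹ := by
    have h5 : (((γ 0 + m).toNat + 1 : ℕ) : ℂ) ≠ 0 := Nat.cast_ne_zero.mpr (Nat.succ_ne_zero _)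
    have h6 : ((m.toNat + 1 : ℕ) : ℂ) ≠ 0 := Nat.cast_ne_zero.mpr (Nat.succ_ne_zero _)
    have hprod : ((((γ 0 + m).toNat + 1).factorial * (γ 1 - 1 - m).toNat.factorial *
        (γ 2 - m).toNat.factorial * (m.toNat + 1).factorial : ℕ) : ℂ) =
        ((((γ 0 + m).toNat + 1 : ℕ) : ℂ) * ((m.toNat + 1 : ℕ) : ℂ)) *
        (((γ 0 + m).toNat.factorial * (γ 1 - 1 - m).toNat.factorial *
        (γ 2 - m).toNat.factorial * m.toNat.factorial : ℕ) : ℂ) := by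
      push_cast [Nat.factorial_succ]
      ring
    rw [hprod, mul_inv, ← mul_assoc, mul_inv_cancel₀ (mul_ne_zero h5 h6), one_mul]
  rw [eA, eB, eC, eD, hcast, key, C_mul, C_mul]
  ring

end GammaAux

/-- Multiplication of `F_γ` by `X 2` is a combination
`X₁ F_{γ¹} + X₂ (z₁z₄ − z₂z₃) F_{γ²}`. -/
theorem gammaSeries_mul_var (γ : Fin 4 → ℤ) (hγ : γ 3 = 0) :
    ∃ (X₁ X₂ : ℂ) (δ₁ δ₂ : Fin 4 → ℤ),
      (X 2) * GammaSeries γ =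
        C X₁ * GammaSeries δ₁ +
          C X₂ * ((X 0 * X 3 - X 1 * X 2) * GammaSeries δ₂) := by
  by_cases hs : (γ 0 + γ 1 + γ 2 + 1 : ℤ) = 0
  · -- degenerate case : the Γ-series is zero
    refine ⟨0, 0, γ, γ, ?_⟩
    have hempty : GammaSeries γ = 0 := by
      rw [GammaSeries, Finset.Icc_eq_empty, Finset.sum_empty]
      rw [hγ]
      omega
    rw [hempty]
    simp
  · have hs' : ((γ 0 + γ 1 + γ 2 + 1 : ℤ) : ℂ) ≠ 0 := by
      exact_mod_cast hs
    refine ⟨((γ 2 + 1 : ℤ) : ℂ) * ((γ 0 + γ 2 + 1 : ℤ) : ℂ) / ((γ 0 + γ 1 + γ 2 + 1 : ℤ) : ℂ),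
      -1 / ((γ 0 + γ 1 + γ 2 + 1 : ℤ) : ℂ),
      ![γ 0, γ 1, γ 2 + 1, 0], ![γ 0, γ 1 - 1, γ 2, 0], ?_⟩
    rw [GammaAux.mul_X2 γ hγ, GammaAux.sum_shift γ, sub_mul,
      GammaAux.mul_X0X3 γ, GammaAux.mul_X1X2 γ]
    rw [← Finset.sum_sub_distrib, Finset.mul_sum, Finset.mul_sum, ← Finset.sum_add_distrib]
    refine Finset.sum_congr rfl fun n _ => ?_
    have key : ((γ 2 + 1 - n : ℤ) : ℂ) =
        ((γ 2 + 1 : ℤ) : ℂ) * ((γ 0 + γ 2 + 1 : ℤ) : ℂ) / ((γ 0 + γ 1 + γ 2 + 1 : ℤ) : ℂ) +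
          (-1 / ((γ 0 + γ 1 + γ 2 + 1 : ℤ) : ℂ)) *
            ((((γ 0 + n) * n : ℤ) : ℂ) - (((γ 1 - n) * (γ 2 + 1 - n) : ℤ) : ℂ)) := by
      rw [div_mul_eq_mul_div, ← add_div, eq_div_iff hs']
      push_cast
      ring
    rw [key, C_add, C_mul, C_sub]
    ring
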